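/- Let K be a positive commutative monoid. Then K has the transportation property if and only if the path-of-length-3 schema has the local-to-global consistency property for K-relations; that is, if and only if for all finite types A, B, C, D, every triple of K-relations R1 : A × B → K, R2 : B × C → K, R3 : C × D → K that is pairwise consistent is globally consistent. -/

import Mathlib

/-- A positive commutative monoid `K` has the transportation property if every
balanced instance of the transportation problem over `K` has a solution. -/
def TransportationProperty (K : Type*) [AddCommMonoid K] : Prop :=
  ∀ (m n : ℕ), 0 < m → 0 < n → ∀ (b : Fin m → K) (c : Fin n → K),
    ∑ i, b i = ∑ j, c j →
    ∃ d : Fin m → Fin n → K,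
      (∀ i, ∑ j, d i j = b i) ∧ (∀ j, ∑ i, d i j = c j)

section AuxiliaryLemmas

variable {K : Type*} [AddCommMonoid K]

/-- In a positive monoid, a sum is zero only if every summand is zero. -/
lemma posSum_aux {ι : Type*} (hpos : ∀ p q : K, p + q = 0 → p = 0 ∧ q = 0)
    (s : Finset ι) (f : ι → K) (h : ∑ i ∈ s, f i = 0) : ∀ i ∈ s, f i = 0 := by
  classical
  induction s using Finset.induction_on with
  | empty => simp
  | insert a s ha ih =>
    rw [Finset.sum_insert ha] at h
    obtain ⟨h1, h2⟩ := hpos _ _ h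
    intro i hi
    rcases Finset.mem_insert.mp hi with rfl | hi
    · exact h1
    · exact ih h2 i hi

/-- Splitting a two-term decomposition of a sum along the summands,
using the Riesz refinement property. -/
lemma splitLem_aux (hpos : ∀ p q : K, p + q = 0 → p = 0 ∧ q = 0)
    (hriesz : ∀ p q r s : K, p + q = r + s →
      ∃ x11 x12 x21 x22 : K, x11 + x12 = p ∧ x21 + x22 = q ∧ x11 + x21 = r ∧ x12 + x22 = s) :
    ∀ (n : ℕ) (x y : K) (c : Fin n → K), x + y = ∑ j, c j →
      ∃ u v : Fin n → K, (∀ j, u j + v j = c j) ∧ ∑ j, u j = x ∧ ∑ j, v j = y := by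
  intro n
  induction n with
  | zero =>
    intro x y c h
    simp only [Finset.univ_eq_empty, Finset.sum_empty] at h
    obtain ⟨hx, hy⟩ := hpos _ _ h
    exact ⟨0, 0, fun j => j.elim0, by simp [hx], by simp [hy]⟩
  | succ n ih =>
    intro x y c h
    rw [Fin.sum_univ_succ] at h
    obtain ⟨a11, a12, a21, a22, h1, h2, h3, h4⟩ := hriesz x y (c 0) (∑ j : Fin n, c j.succ) h
    obtain ⟨u', v', hc', hu', hv'⟩ := ih a12 a22 (fun j => c j.succ) h4
    refine ⟨Fin.cons a11 u', Fin.cons a21 v', ?_, ?_, ?_⟩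
    · intro j
      refine Fin.cases ?_ ?_ j
      · simpa using h3
      · intro i; simpa using hc' i
    · rw [Fin.sum_univ_succ]; simpa [hu'] using h1
    · rw [Fin.sum_univ_succ]; simpa [hv'] using h2

/-- The Riesz refinement property implies the full transportation property. -/
lemma transpLem_aux (hpos : ∀ p q : K, p + q = 0 → p = 0 ∧ q = 0)
    (hriesz : ∀ p q r s : K, p + q = r + s →
      ∃ x11 x12 x21 x22 : K, x11 + x12 = p ∧ x21 + x22 = q ∧ x11 + x21 = r ∧ x12 + x22 = s) :
    ∀ (m n : ℕ) (b : Fin m → K) (c : Fin n → K), ∑ i, b i = ∑ j, c j →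
      ∃ d : Fin m → Fin n → K, (∀ i, ∑ j, d i j = b i) ∧ (∀ j, ∑ i, d i j = c j) := by
  intro m
  induction m with
  | zero =>
    intro n b c h
    simp only [Finset.univ_eq_empty, Finset.sum_empty] at h
    refine ⟨fun i => i.elim0, fun i => i.elim0, fun j => ?_⟩
    simp only [Finset.univ_eq_empty, Finset.sum_empty]
    exact (posSum_aux hpos Finset.univ c h.symm j (Finset.mem_univ j)).symm
  | succ m ih =>
    intro n b c h
    rw [Fin.sum_univ_succ] at h
    obtain ⟨u, v, huv, hu, hv⟩ := splitLem_aux hpos hriesz n (b 0) (∑ i : Fin m, b i.succ) c h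
    obtain ⟨d', hd1, hd2⟩ := ih n (fun i => b i.succ) v hv.symm
    refine ⟨Fin.cons u d', ?_, ?_⟩
    · intro i
      refine Fin.cases ?_ ?_ i
      · simpa using hu
      · intro i; simpa using hd1 i
    · intro j
      rw [Fin.sum_univ_succ]
      simp only [Fin.cons_zero, Fin.cons_succ]
      rw [hd2 j, huv j]

end AuxiliaryLemmas

/-- `K` has the transportation property iff the path-of-length-3
schema has the local-to-global consistency property for `K`-relations. -/
theorem transportation_iff_pathThree (K : Type*) [AddCommMonoid K]
    (hpos : ∀ p q : K, p + q = 0 → p = 0 ∧ q = 0) :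
    TransportationProperty K ↔
      ∀ (A B C D : Type) [Fintype A] [Fintype B] [Fintype C] [Fintype D]
        (R1 : A × B → K) (R2 : B × C → K) (R3 : C × D → K),
        -- pairwise consistency
        (∃ W12 : A × B × C → K,
          (∀ (a : A) (b : B), ∑ c : C, W12 (a, b, c) = R1 (a, b)) ∧
          (∀ (b : B) (c : C), ∑ a : A, W12 (a, b, c) = R2 (b, c))) →
        (∃ W23 : B × C × D → K,
          (∀ (b : B) (c : C), ∑ d : D, W23 (b, c, d) = R2 (b, c)) ∧
          (∀ (c : C) (d : D), ∑ b : B, W23 (b, c, d) = R3 (c, d))) →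
        (∃ W13 : A × B × C × D → K,
          (∀ (a : A) (b : B), ∑ c : C, ∑ d : D, W13 (a, b, c, d) = R1 (a, b)) ∧
          (∀ (c : C) (d : D), ∑ a : A, ∑ b : B, W13 (a, b, c, d) = R3 (c, d))) →
        -- global consistency
        ∃ W : A × B × C × D → K,
          (∀ (a : A) (b : B), ∑ c : C, ∑ d : D, W (a, b, c, d) = R1 (a, b)) ∧
          (∀ (b : B) (c : C), ∑ a : A, ∑ d : D, W (a, b, c, d) = R2 (b, c)) ∧
          (∀ (c : C) (d : D), ∑ a : A, ∑ b : B, W (a, b, c, d) = R3 (c, d)) := by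
  classical
  constructor
  · -- Transportation property implies local-to-global consistency.
    intro hT A B C D _ _ _ _ R1 R2 R3 h12 h23 h13
    obtain ⟨W12, h12a, h12b⟩ := h12
    obtain ⟨W23, h23a, h23b⟩ := h23
    obtain ⟨W13, h13a, h13b⟩ := h13
    by_cases hA : Nonempty A
    · by_cases hD : Nonempty D
      · have hcA : 0 < Fintype.card A := Fintype.card_pos
        have hcD : 0 < Fintype.card D := Fintype.card_pos
        set eA : Fin (Fintype.card A) ≃ A := (Fintype.equivFin A).symm with heA
        set eD : Fin (Fintype.card D) ≃ D := (Fintype.equivFin D).symm with heD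
        have key : ∀ bc : B × C, ∃ T : Fin (Fintype.card A) → Fin (Fintype.card D) → K,
            (∀ i, ∑ j, T i j = W12 (eA i, bc.1, bc.2)) ∧
            (∀ j, ∑ i, T i j = W23 (bc.1, bc.2, eD j)) := by
          intro bc
          apply hT _ _ hcA hcD
          calc ∑ i, W12 (eA i, bc.1, bc.2) = ∑ a, W12 (a, bc.1, bc.2) :=
                Equiv.sum_comp eA (fun a => W12 (a, bc.1, bc.2))
            _ = R2 (bc.1, bc.2) := h12b _ _
            _ = ∑ d, W23 (bc.1, bc.2, d) := (h23a _ _).symm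
            _ = ∑ j, W23 (bc.1, bc.2, eD j) :=
                (Equiv.sum_comp eD (fun d => W23 (bc.1, bc.2, d))).symm
        choose T hT1 hT2 using key
        refine ⟨fun x => T (x.2.1, x.2.2.1) (eA.symm x.1) (eD.symm x.2.2.2), ?_, ?_, ?_⟩
        · intro a b
          have hcd : ∀ c : C, ∑ d : D, T (b, c) (eA.symm a) (eD.symm d) = W12 (a, b, c) := by
            intro c
            calc ∑ d : D, T (b, c) (eA.symm a) (eD.symm d)
                = ∑ j, T (b, c) (eA.symm a) j :=
                  Equiv.sum_comp eD.symm (fun j => T (b, c) (eA.symm a) j)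
              _ = W12 (eA (eA.symm a), b, c) := hT1 (b, c) (eA.symm a)
              _ = W12 (a, b, c) := by rw [Equiv.apply_symm_apply]
          rw [Finset.sum_congr rfl (fun c _ => hcd c)]
          exact h12a a b
        · intro b c
          calc ∑ a : A, ∑ d : D, T (b, c) (eA.symm a) (eD.symm d)
              = ∑ a : A, ∑ j, T (b, c) (eA.symm a) j := by
                refine Finset.sum_congr rfl fun a _ => ?_
                exact Equiv.sum_comp eD.symm (fun j => T (b, c) (eA.symm a) j)
            _ = ∑ a : A, W12 (eA (eA.symm a), b, c) := by
                refine Finset.sum_congr rfl fun a _ => hT1 (b, c) (eA.symm a)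
            _ = ∑ a : A, W12 (a, b, c) := by
                refine Finset.sum_congr rfl fun a _ => by rw [Equiv.apply_symm_apply]
            _ = R2 (b, c) := h12b b c
        · intro c d
          calc ∑ a : A, ∑ b : B, T (b, c) (eA.symm a) (eD.symm d)
              = ∑ b : B, ∑ a : A, T (b, c) (eA.symm a) (eD.symm d) := Finset.sum_comm
            _ = ∑ b : B, ∑ i, T (b, c) i (eD.symm d) := by
                refine Finset.sum_congr rfl fun b _ => ?_
                exact Equiv.sum_comp eA.symm (fun i => T (b, c) i (eD.symm d))
            _ = ∑ b : B, W23 (b, c, eD (eD.symm d)) := by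
                refine Finset.sum_congr rfl fun b _ => hT2 (b, c) (eD.symm d)
            _ = ∑ b : B, W23 (b, c, d) := by
                refine Finset.sum_congr rfl fun b _ => by rw [Equiv.apply_symm_apply]
            _ = R3 (c, d) := h23b c d
      · -- `D` is empty: all relations touching `D`-sums are zero.
        rw [not_nonempty_iff] at hD
        refine ⟨fun _ => 0, ?_, ?_, ?_⟩
        · intro a b
          rw [← h13a a b]
          simp
        · intro b c
          rw [← h23a b c]
          simp
        · intro c d
          exact (IsEmpty.false d).elim
    · -- `A` is empty.
      rw [not_nonempty_iff] at hA
      refine ⟨fun _ => 0, ?_, ?_, ?_⟩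
      · intro a b
        exact (IsEmpty.false a).elim
      · intro b c
        rw [← h12b b c]
        simp
      · intro c d
        rw [← h13b c d]
        simp
  · -- Local-to-global consistency implies the transportation property,
    -- via the Riesz refinement property extracted from a Boolean gadget.
    intro H
    have hriesz : ∀ p q r s : K, p + q = r + s →
        ∃ x11 x12 x21 x22 : K,
          x11 + x12 = p ∧ x21 + x22 = q ∧ x11 + x21 = r ∧ x12 + x22 = s := by
      intro p q r s hpq
      set R1 : Bool × Bool → K :=
        fun x => if x.2 then (if x.1 then s else r) else (if x.1 then q else p) with hR1def
      set R2 : Bool × Bool → K := fun x => if x.1 = x.2 then p + q else 0 with hR2def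
      set R3 : Bool × Bool → K :=
        fun x => if x.1 then (if x.2 then q else p) else (if x.2 then s else r) with hR3def
      have h12 : ∃ W12 : Bool × Bool × Bool → K,
          (∀ (a b : Bool), ∑ c : Bool, W12 (a, b, c) = R1 (a, b)) ∧
          (∀ (b c : Bool), ∑ a : Bool, W12 (a, b, c) = R2 (b, c)) := by
        refine ⟨fun x => if x.2.1 = x.2.2 then R1 (x.1, x.2.1) else 0, ?_, ?_⟩
        · intro a b
          cases a <;> cases b <;> simp [Fintype.sum_bool, hR1def]
        · intro b c
          cases b <;> cases c <;>
            simp [Fintype.sum_bool, hR1def, hR2def] <;>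
            first
              | exact add_comm _ _
              | (rw [hpq]; exact add_comm s r)
      have h23 : ∃ W23 : Bool × Bool × Bool → K,
          (∀ (b c : Bool), ∑ d : Bool, W23 (b, c, d) = R2 (b, c)) ∧
          (∀ (c d : Bool), ∑ b : Bool, W23 (b, c, d) = R3 (c, d)) := by
        refine ⟨fun x => if x.1 = x.2.1 then R3 (x.2.1, x.2.2) else 0, ?_, ?_⟩
        · intro b c
          cases b <;> cases c <;>
            simp [Fintype.sum_bool, hR3def, hR2def] <;>
            first
              | exact add_comm _ _
              | (rw [hpq]; exact add_comm s r)
        · intro c d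
          cases c <;> cases d <;> simp [Fintype.sum_bool, hR3def]
      have h13 : ∃ W13 : Bool × Bool × Bool × Bool → K,
          (∀ (a b : Bool), ∑ c : Bool, ∑ d : Bool, W13 (a, b, c, d) = R1 (a, b)) ∧
          (∀ (c d : Bool), ∑ a : Bool, ∑ b : Bool, W13 (a, b, c, d) = R3 (c, d)) := by
        refine ⟨fun x => if x.2.2.1 = !x.2.1 ∧ x.2.2.2 = x.1 then R1 (x.1, x.2.1) else 0, ?_, ?_⟩
        · intro a b
          cases a <;> cases b <;> simp [Fintype.sum_bool, hR1def]
        · intro c d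
          cases c <;> cases d <;> simp [Fintype.sum_bool, hR1def, hR3def]
      obtain ⟨W, hW1, hW2, hW3⟩ := H Bool Bool Bool Bool R1 R2 R3 h12 h23 h13
      have h0 : ∀ b c : Bool, b ≠ c → ∀ a d : Bool, W (a, b, c, d) = 0 := by
        intro b c hbc a d
        have h := hW2 b c
        rw [hR2def] at h
        simp only [if_neg hbc] at h
        rw [Fintype.sum_bool] at h
        obtain ⟨h1, h2⟩ := hpos _ _ h
        rw [Fintype.sum_bool] at h1 h2
        obtain ⟨h11, h12⟩ := hpos _ _ h1
        obtain ⟨h21, h22⟩ := hpos _ _ h2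
        cases a <;> cases d <;> assumption
      have hp := hW1 false false
      have hq := hW1 true false
      have hr := hW3 false false
      have hs := hW3 false true
      simp only [Fintype.sum_bool, hR1def, hR3def, if_neg, if_pos] at hp hq hr hs
      rw [h0 false true (by simp) false true, h0 false true (by simp) false false] at hp
      rw [h0 false true (by simp) true true, h0 false true (by simp) true false] at hq
      rw [h0 true false (by simp) true false, h0 true false (by simp) false false] at hr
      rw [h0 true false (by simp) true true, h0 true false (by simp) false true] at hs
      simp only [Bool.false_eq_true, if_false, zero_add, add_zero] at hp hq hr hs
      refine ⟨W (false, false, false, false), W (false, false, false, true),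
              W (true, false, false, false), W (true, false, false, true), ?_, ?_, ?_, ?_⟩
      · rw [← hp]; exact add_comm _ _
      · rw [← hq]; exact add_comm _ _
      · rw [← hr]; exact add_comm _ _
      · rw [← hs]; exact add_comm _ _
    intro m n _ _ b c hsum
    exact transpLem_aux hpos hriesz m n b c hsum
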